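/- Every Whitehead automorphism of F_n lies in the subgroup of Aut(F_n) generated by the right Nielsen automorphisms ρ_{ij} (i ≠ j), the partial conjugations K_{ij} (i ≠ j), and the inversions S_i. -/

import Mathlib

namespace FoldDecomp

open FreeGroup

variable {n : ℕ}

/-- Build an automorphism of the free group from images of generators plus an inverse system. -/
def mkAut (f g : Fin n → FreeGroup (Fin n))
    (h1 : ∀ k, FreeGroup.lift g (f k) = FreeGroup.of k)
    (h2 : ∀ k, FreeGroup.lift f (g k) = FreeGroup.of k) :
    MulAut (FreeGroup (Fin n)) where
  toFun := FreeGroup.lift f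
  invFun := FreeGroup.lift g
  left_inv := fun x => by
    have h : (FreeGroup.lift g).comp (FreeGroup.lift f) = MonoidHom.id _ :=
      FreeGroup.ext_hom _ _ (by simp [h1])
    simpa using DFunLike.congr_fun h x
  right_inv := fun x => by
    have h : (FreeGroup.lift f).comp (FreeGroup.lift g) = MonoidHom.id _ :=
      FreeGroup.ext_hom _ _ (by simp [h2])
    simpa using DFunLike.congr_fun h x
  map_mul' := map_mul _

/-- The right Nielsen automorphism `ρ i j`, sending `xᵢ ↦ xᵢxⱼ` and fixing the other
generators. -/
def rho (i j : Fin n) (hij : i ≠ j) : MulAut (FreeGroup (Fin n)) :=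
  mkAut (fun k => if k = i then of i * of j else of k)
    (fun k => if k = i then of i * (of j)⁻¹ else of k)
    (by
      intro k
      by_cases hk : k = i
      · subst hk
        simp [if_neg (Ne.symm hij)]
      · simp [hk])
    (by
      intro k
      by_cases hk : k = i
      · subst hk
        simp [if_neg (Ne.symm hij)]
      · simp [hk])

/-- The partial conjugation `K i j`, sending `xᵢ ↦ xⱼxᵢxⱼ⁻¹` and fixing the other generators. -/
def Kc (i j : Fin n) (hij : i ≠ j) : MulAut (FreeGroup (Fin n)) :=
  mkAut (fun k => if k = i then of j * of i * (of j)⁻¹ else of k)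
    (fun k => if k = i then (of j)⁻¹ * of i * of j else of k)
    (by
      intro k
      by_cases hk : k = i
      · subst hk
        simp [if_neg (Ne.symm hij)]
        group
      · simp [hk])
    (by
      intro k
      by_cases hk : k = i
      · subst hk
        simp [if_neg (Ne.symm hij)]
        group
      · simp [hk])

/-- The inversion `S i`, sending `xᵢ ↦ xᵢ⁻¹` and fixing the other generators. -/
def Sinv (i : Fin n) : MulAut (FreeGroup (Fin n)) :=
  mkAut (fun k => if k = i then (of i)⁻¹ else of k)
    (fun k => if k = i then (of i)⁻¹ else of k)
    (by
      intro k
      by_cases hk : k = i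
      · subst hk; simp
      · simp [hk])
    (by
      intro k
      by_cases hk : k = i
      · subst hk; simp
      · simp [hk])

/-- The automorphism `K i j k`, sending `xᵢ ↦ xᵢ[xⱼ,xₖ]` and fixing the other generators,
where `[a,b] = a * b * a⁻¹ * b⁻¹`. -/
def Kcom (i j k : Fin n) (hji : j ≠ i) (hki : k ≠ i) : MulAut (FreeGroup (Fin n)) :=
  mkAut (fun l => if l = i then of i * (of j * of k * (of j)⁻¹ * (of k)⁻¹) else of l)
    (fun l => if l = i then of i * (of k * of j * (of k)⁻¹ * (of j)⁻¹) else of l)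
    (by
      intro l
      by_cases hl : l = i
      · subst hl
        simp [if_neg hji, if_neg hki]
        group
      · simp [hl])
    (by
      intro l
      by_cases hl : l = i
      · subst hl
        simp [if_neg hji, if_neg hki]
        group
      · simp [hl])

/-- The element of the free group corresponding to a letter of `X ∪ X⁻¹`:
`(i, true)` stands for `xᵢ` and `(i, false)` for `xᵢ⁻¹`. -/
def wletter (a : Fin n × Bool) : FreeGroup (Fin n) :=
  cond a.2 (FreeGroup.of a.1) (FreeGroup.of a.1)⁻¹

/-- A Whitehead automorphism of the first type: it permutes and possibly inverts the
generators. -/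
def IsWhitehead₁ (φ : MulAut (FreeGroup (Fin n))) : Prop :=
  ∃ (σ : Equiv.Perm (Fin n)) (ε : Fin n → ℤ),
    (∀ i, ε i = 1 ∨ ε i = -1) ∧ ∀ i, φ (of i) = of (σ i) ^ ε i

/-- A Whitehead automorphism of the second type `(A, a)`: here `a ∈ X ∪ X⁻¹`,
`A ⊆ X ∪ X⁻¹` with `a ∈ A` and `a⁻¹ ∉ A`; letters are encoded as pairs in `Fin n × Bool`.
It fixes `x_j` if `x_j = a^{±1}`, and otherwise sends `x_j ↦ a^{α_j} x_j a^{-β_j}` where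
`α_j = χ_A(x_j)` and `β_j = χ_A(x_j⁻¹)`. -/
def IsWhitehead₂ (φ : MulAut (FreeGroup (Fin n))) : Prop :=
  ∃ (a : Fin n × Bool) (A : Finset (Fin n × Bool)),
    a ∈ A ∧ (a.1, !a.2) ∉ A ∧
    φ (of a.1) = of a.1 ∧
    ∀ j : Fin n, j ≠ a.1 →
      φ (of j) = wletter a ^ (if (j, true) ∈ A then (1 : ℤ) else 0) * of j *
        wletter a ^ (-(if (j, false) ∈ A then (1 : ℤ) else 0))

/-- A Whitehead automorphism (of first or second type). -/
def IsWhitehead (φ : MulAut (FreeGroup (Fin n))) : Prop :=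
  IsWhitehead₁ φ ∨ IsWhitehead₂ φ



lemma mulAut_ext {φ ψ : MulAut (FreeGroup (Fin n))}
    (h : ∀ i, φ (of i) = ψ (of i)) : φ = ψ := by
  have : (φ : FreeGroup (Fin n) →* FreeGroup (Fin n)) = ψ := FreeGroup.ext_hom _ _ h
  ext x
  simpa using DFunLike.congr_fun this x

lemma mkAut_apply (f g : Fin n → FreeGroup (Fin n)) (h1 h2) (x : FreeGroup (Fin n)) :
    mkAut f g h1 h2 x = FreeGroup.lift f x := rfl

lemma mkAut_inv_apply (f g : Fin n → FreeGroup (Fin n)) (h1 h2) (x : FreeGroup (Fin n)) :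
    (mkAut f g h1 h2)⁻¹ x = FreeGroup.lift g x := rfl

@[simp] lemma mkAut_symm_apply (f g : Fin n → FreeGroup (Fin n)) (h1 h2) (x : FreeGroup (Fin n)) :
    (mkAut f g h1 h2).symm x = FreeGroup.lift g x := rfl

example (i j : Fin n) (hij : i ≠ j) (k : Fin n) :
    rho i j hij (of k) = if k = i then of i * of j else of k := by
  simp [rho, mkAut_apply]

example (i j : Fin n) (hij : i ≠ j) (k : Fin n) :
    (rho i j hij)⁻¹ (of k) = if k = i then of i * (of j)⁻¹ else of k := by
  simp [rho, mkAut_inv_apply]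

lemma lift_wletter (F : Fin n → FreeGroup (Fin n)) (a : Fin n × Bool)
    (hF : F a.1 = of a.1) : FreeGroup.lift F (wletter a) = wletter a := by
  cases hb : a.2 <;> simp [wletter, hb, hF]

lemma elemW_aux (j : Fin n) (a : Fin n × Bool) (p q p' q' : ℤ) (hj : j ≠ a.1)
    (hp : p' + p = 0) (hq : q + q' = 0) (k : Fin n) :
    FreeGroup.lift (fun k => if k = j then wletter a ^ p' * of j * wletter a ^ q' else of k)
      (if k = j then wletter a ^ p * of j * wletter a ^ q else of k) = of k := by
  have hw : FreeGroup.lift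
      (fun k => if k = j then wletter a ^ p' * of j * wletter a ^ q' else of k)
      (wletter a) = wletter a :=
    lift_wletter _ _ (by simp [Ne.symm hj])
  by_cases hk : k = j
  · rw [hk, if_pos rfl]
    simp only [_root_.map_mul, map_zpow, hw, FreeGroup.lift_apply_of, if_pos rfl, if_true]
    rw [show p = -p' by omega, show q = -q' by omega]
    group
  · simp [hk]

/-- Elementary Whitehead piece on one generator: `x_j ↦ a^p x_j a^q`. -/
def elemW (j : Fin n) (a : Fin n × Bool) (p q : ℤ) (hj : j ≠ a.1) :
    MulAut (FreeGroup (Fin n)) :=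
  mkAut
    (fun k => if k = j then wletter a ^ p * of j * wletter a ^ q else of k)
    (fun k => if k = j then wletter a ^ (-p) * of j * wletter a ^ (-q) else of k)
    (fun k => elemW_aux j a p q (-p) (-q) hj (by omega) (by omega) k)
    (fun k => elemW_aux j a (-p) (-q) p q hj (by omega) (by omega) k)

lemma elemW_apply_of (j : Fin n) (a : Fin n × Bool) (p q : ℤ) (hj : j ≠ a.1) (k : Fin n) :
    elemW j a p q hj (of k) =
      if k = j then wletter a ^ p * of j * wletter a ^ q else of k := by
  simp [elemW, mkAut_apply]

lemma elemW_apply_wletter (j : Fin n) (a : Fin n × Bool) (p q : ℤ) (hj : j ≠ a.1) :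
    elemW j a p q hj (wletter a) = wletter a := by
  cases hb : a.2 <;>
    simp [wletter, hb, elemW_apply_of, Ne.symm hj]

/-- The Nielsen generating set. -/
def NSet (n : ℕ) : Set (MulAut (FreeGroup (Fin n))) :=
  {ψ : MulAut (FreeGroup (Fin n)) |
      (∃ i j : Fin n, ∃ hij : i ≠ j, ψ = rho i j hij) ∨
      (∃ i j : Fin n, ∃ hij : i ≠ j, ψ = Kc i j hij) ∨
      (∃ i : Fin n, ψ = Sinv i)}

lemma rho_mem (i j : Fin n) (hij : i ≠ j) : rho i j hij ∈ Subgroup.closure (NSet n) :=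
  Subgroup.subset_closure (Or.inl ⟨i, j, hij, rfl⟩)

lemma Kc_mem (i j : Fin n) (hij : i ≠ j) : Kc i j hij ∈ Subgroup.closure (NSet n) :=
  Subgroup.subset_closure (Or.inr (Or.inl ⟨i, j, hij, rfl⟩))

lemma Sinv_mem (i : Fin n) : Sinv i ∈ Subgroup.closure (NSet n) :=
  Subgroup.subset_closure (Or.inr (Or.inr ⟨i, rfl⟩))

lemma elemW_mem (j : Fin n) (a : Fin n × Bool) (p q : ℤ) (hj : j ≠ a.1)
    (hp : p = 0 ∨ p = 1) (hq : q = 0 ∨ q = -1) :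
    elemW j a p q hj ∈ Subgroup.closure (NSet n) := by
  obtain ⟨m, b⟩ := a
  have key : ∀ (φ : MulAut (FreeGroup (Fin n))),
      φ ∈ Subgroup.closure (NSet n) →
      (φ (of j) = wletter (m, b) ^ p * of j * wletter (m, b) ^ q) →
      (∀ k, k ≠ j → φ (of k) = of k) → elemW j (m, b) p q hj ∈ Subgroup.closure (NSet n) := by
    intro φ hmem h1 h2
    have : elemW j (m, b) p q hj = φ := by
      apply mulAut_ext
      intro k
      by_cases hk : k = j
      · subst hk; rw [h1, elemW_apply_of, if_pos rfl]
      · rw [h2 k hk, elemW_apply_of, if_neg hk]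
    rw [this]; exact hmem
  rcases hp with hp | hp <;> rcases hq with hq | hq <;> subst hp <;> subst hq <;> cases b
  -- p=0, q=0
  · exact key 1 (one_mem _) (by simp) (by simp)
  · exact key 1 (one_mem _) (by simp) (by simp)
  -- p=0, q=-1
  · exact key (rho j m hj) (rho_mem j m hj)
      (by simp [rho, mkAut_apply, wletter])
      (by intro k hk; simp [rho, mkAut_apply, hk])
  · exact key ((rho j m hj)⁻¹) (inv_mem (rho_mem j m hj))
      (by simp [rho, mkAut_inv_apply, wletter])
      (by intro k hk; simp [rho, mkAut_inv_apply, hk])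
  -- p=1, q=0
  · exact key ((Kc j m hj * rho j m hj)⁻¹) (inv_mem (mul_mem (Kc_mem j m hj) (rho_mem j m hj)))
      (by
        simp [mul_inv_rev, MulAut.mul_apply, Kc, rho, mkAut_inv_apply, wletter, Ne.symm hj]
        group)
      (by intro k hk; simp [mul_inv_rev, MulAut.mul_apply, Kc, rho, mkAut_inv_apply, hk])
  · exact key (Kc j m hj * rho j m hj) (mul_mem (Kc_mem j m hj) (rho_mem j m hj))
      (by
        simp [MulAut.mul_apply, Kc, rho, mkAut_apply, wletter, Ne.symm hj])
      (by intro k hk; simp [MulAut.mul_apply, Kc, rho, mkAut_apply, hk])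
  -- p=1, q=-1
  · exact key ((Kc j m hj)⁻¹) (inv_mem (Kc_mem j m hj))
      (by simp [Kc, mkAut_inv_apply, wletter])
      (by intro k hk; simp [Kc, mkAut_inv_apply, hk])
  · exact key (Kc j m hj) (Kc_mem j m hj)
      (by simp [Kc, mkAut_apply, wletter])
      (by intro k hk; simp [Kc, mkAut_apply, hk])

lemma type2_mem (a : Fin n × Bool) (A : Finset (Fin n × Bool)) (S : Finset (Fin n)) :
    ∃ ψ ∈ Subgroup.closure (NSet n), ∀ k : Fin n, ψ (of k) =
      if k ∈ S ∧ k ≠ a.1 then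
        wletter a ^ (if (k, true) ∈ A then (1 : ℤ) else 0) * of k *
          wletter a ^ (-(if (k, false) ∈ A then (1 : ℤ) else 0))
      else of k := by
  classical
  induction S using Finset.induction_on with
  | empty => exact ⟨1, one_mem _, by simp⟩
  | insert j S hjS ih =>
    obtain ⟨ψ, hψG, hψ⟩ := ih
    by_cases hja : j = a.1
    · refine ⟨ψ, hψG, fun k => ?_⟩
      rw [hψ k]
      congr 1
      have : (k ∈ S ∧ k ≠ a.1) ↔ (k ∈ insert j S ∧ k ≠ a.1) := by
        subst hja
        simp only [Finset.mem_insert]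
        constructor
        · rintro ⟨h1, h2⟩; exact ⟨Or.inr h1, h2⟩
        · rintro ⟨h1 | h1, h2⟩
          · exact absurd h1 h2
          · exact ⟨h1, h2⟩
      simp only [this]
    · refine ⟨elemW j a (if (j, true) ∈ A then (1 : ℤ) else 0)
        (-(if (j, false) ∈ A then (1 : ℤ) else 0)) hja * ψ,
        mul_mem (elemW_mem j a _ _ hja (by split_ifs <;> simp) (by split_ifs <;> simp)) hψG,
        fun k => ?_⟩
      rw [MulAut.mul_apply, hψ k]
      by_cases hk : k = j
      · subst hk
        have h1 : ¬(k ∈ S ∧ k ≠ a.1) := fun h => hjS h.1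
        have h2 : k ∈ insert k S ∧ k ≠ a.1 := ⟨Finset.mem_insert_self _ _, hja⟩
        rw [if_neg h1, if_pos h2, elemW_apply_of, if_pos rfl]
      · have hcond : (k ∈ insert j S ∧ k ≠ a.1) ↔ (k ∈ S ∧ k ≠ a.1) := by
          simp [Finset.mem_insert, hk]
        by_cases hkS : k ∈ S ∧ k ≠ a.1
        · rw [if_pos hkS, if_pos (hcond.mpr hkS)]
          rw [_root_.map_mul, _root_.map_mul, map_zpow, map_zpow,
            elemW_apply_wletter, elemW_apply_of, if_neg hk]
        · rw [if_neg hkS, if_neg (fun h => hkS (hcond.mp h)), elemW_apply_of, if_neg hk]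

/-- The permutation automorphism `x_i ↦ x_{σ i}`. -/
def permAut (σ : Equiv.Perm (Fin n)) : MulAut (FreeGroup (Fin n)) :=
  mkAut (fun k => of (σ k)) (fun k => of (σ⁻¹ k)) (by simp) (by simp)

lemma permAut_apply_of (σ : Equiv.Perm (Fin n)) (k : Fin n) :
    permAut σ (of k) = of (σ k) := by simp [permAut, mkAut_apply]

lemma permAut_mul (σ τ : Equiv.Perm (Fin n)) :
    permAut (σ * τ) = permAut σ * permAut τ :=
  mulAut_ext (by simp [permAut_apply_of, MulAut.mul_apply])

lemma permAut_one : permAut (1 : Equiv.Perm (Fin n)) = 1 :=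
  mulAut_ext (by simp [permAut_apply_of])

lemma permAut_swap_mem (i j : Fin n) :
    permAut (Equiv.swap i j) ∈ Subgroup.closure (NSet n) := by
  by_cases hij : i = j
  · subst hij; rw [Equiv.swap_self]; rw [show (Equiv.refl (Fin n)) = 1 from rfl, permAut_one]
    exact one_mem _
  · have hji : j ≠ i := fun h => hij h.symm
    have key : permAut (Equiv.swap i j) =
        Sinv i * (rho j i hji)⁻¹ * (Kc j i hji)⁻¹ * rho i j hij * (rho j i hji)⁻¹ := by
      apply mulAut_ext
      intro k
      rw [permAut_apply_of]
      by_cases hk : k = i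
      · subst hk
        rw [Equiv.swap_apply_left]
        simp [MulAut.mul_apply, Sinv, Kc, rho, mkAut_apply, mkAut_inv_apply, hij, hji]
        group
      · by_cases hk2 : k = j
        · subst hk2
          rw [Equiv.swap_apply_right]
          simp [MulAut.mul_apply, Sinv, Kc, rho, mkAut_apply, mkAut_inv_apply, hij, hji]
          try group
        · rw [Equiv.swap_apply_of_ne_of_ne hk hk2]
          simp [MulAut.mul_apply, Sinv, Kc, rho, mkAut_apply, mkAut_inv_apply, hk, hk2]
    rw [key]
    exact mul_mem (mul_mem (mul_mem (mul_mem (Sinv_mem i) (inv_mem (rho_mem j i hji)))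
      (inv_mem (Kc_mem j i hji))) (rho_mem i j hij)) (inv_mem (rho_mem j i hji))

lemma permAut_mem (σ : Equiv.Perm (Fin n)) :
    permAut σ ∈ Subgroup.closure (NSet n) := by
  refine Equiv.Perm.swap_induction_on σ ?_ ?_
  · rw [permAut_one]; exact one_mem _
  · intro f x y hxy ih
    rw [permAut_mul]
    exact mul_mem (permAut_swap_mem x y) ih

lemma diag_mem (S : Finset (Fin n)) :
    ∃ ψ ∈ Subgroup.closure (NSet n), ∀ k : Fin n,
      ψ (of k) = if k ∈ S then (of k)⁻¹ else of k := by
  classical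
  induction S using Finset.induction_on with
  | empty => exact ⟨1, one_mem _, by simp⟩
  | insert j S hjS ih =>
    obtain ⟨ψ, hψG, hψ⟩ := ih
    refine ⟨Sinv j * ψ, mul_mem (Sinv_mem j) hψG, fun k => ?_⟩
    rw [MulAut.mul_apply, hψ k]
    by_cases hk : k = j
    · subst hk
      rw [if_neg hjS, if_pos (Finset.mem_insert_self _ _)]
      simp [Sinv, mkAut_apply]
    · have : (k ∈ insert j S) ↔ k ∈ S := by simp [Finset.mem_insert, hk]
      by_cases hkS : k ∈ S
      · rw [if_pos hkS, if_pos (this.mpr hkS), _root_.map_inv]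
        simp [Sinv, mkAut_apply, hk]
      · rw [if_neg hkS, if_neg (fun h => hkS (this.mp h))]
        simp [Sinv, mkAut_apply, hk]

/-- Every Whitehead automorphism lies in the subgroup of `Aut(F_n)` generated by the
right Nielsen automorphisms `ρ i j`, the partial conjugations `K i j`, and the
inversions `S i`. -/
theorem whitehead_mem_closure_nielsen (n : ℕ) (φ : MulAut (FreeGroup (Fin n)))
    (hφ : IsWhitehead φ) :
    φ ∈ Subgroup.closure {ψ : MulAut (FreeGroup (Fin n)) |
      (∃ i j : Fin n, ∃ hij : i ≠ j, ψ = rho i j hij) ∨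
      (∃ i j : Fin n, ∃ hij : i ≠ j, ψ = Kc i j hij) ∨
      (∃ i : Fin n, ψ = Sinv i)} := by
  show φ ∈ Subgroup.closure (NSet n)
  classical
  rcases hφ with h1 | h2
  · obtain ⟨σ, ε, hε, hφσ⟩ := h1
    obtain ⟨ψ, hψG, hψ⟩ := diag_mem (Finset.univ.filter (fun i => ε (σ⁻¹ i) = -1))
    have heq : φ = ψ * permAut σ := by
      apply mulAut_ext
      intro i
      rw [hφσ i, MulAut.mul_apply, permAut_apply_of, hψ (σ i)]
      have hmem : σ i ∈ Finset.univ.filter (fun k => ε (σ⁻¹ k) = -1) ↔ ε i = -1 := by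
        simp
      rcases hε i with h | h
      · have hni : σ i ∉ Finset.univ.filter (fun k => ε (σ⁻¹ k) = -1) := by
          intro hc
          have := hmem.mp hc
          omega
        rw [if_neg hni, h, zpow_one]
      · rw [if_pos (hmem.mpr h), h, zpow_neg_one]
    rw [heq]
    exact mul_mem hψG (permAut_mem σ)
  · obtain ⟨a, A, _, _, hfix, hrest⟩ := h2
    obtain ⟨ψ, hψG, hψ⟩ := type2_mem a A Finset.univ
    have heq : φ = ψ := by
      apply mulAut_ext
      intro k
      by_cases hk : k = a.1
      · subst hk
        rw [hfix, hψ,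
          if_neg (show ¬(a.1 ∈ Finset.univ ∧ a.1 ≠ a.1) from fun h => h.2 rfl)]
      · rw [hrest k hk, hψ,
          if_pos (show k ∈ Finset.univ ∧ k ≠ a.1 from ⟨Finset.mem_univ _, hk⟩)]
    rw [heq]
    exact hψG
end FoldDecomp
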